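/- For every n ≥ 1, every strong function f : 2^N → {0,1} with f(∅) = 0 on n voters is max(1, n−1)-roughly weighted, i.e. μ(f) ≤ max(1, n−1). Moreover, for every n ≥ 3 there exists a strong function f : 2^N → {0,1} with f(∅) = 0 such that μ(f) = n − 1; hence the maximum of μ(f) over all strong functions f with f(∅) = 0 on n ≥ 3 voters equals n − 1. -/
import Mathlib


open Finset

/-- `f` is `α`-roughly weighted: there are real weights such that every winning
coalition has weight at least `1` and every losing coalition weight at most `α`. -/
def RoughlyWeighted {n : ℕ} (f : Finset (Fin n) → Bool) (α : ℝ) : Prop :=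
  ∃ w : Fin n → ℝ,
    (∀ S : Finset (Fin n), f S = true → 1 ≤ ∑ i ∈ S, w i) ∧
    (∀ S : Finset (Fin n), f S = false → ∑ i ∈ S, w i ≤ α)

/-- The critical threshold value `μ(f)`: the smallest `α ≥ 1` such that `f` is
`α`-roughly weighted. -/
noncomputable def mu {n : ℕ} (f : Finset (Fin n) → Bool) : ℝ :=
  sInf {α : ℝ | 1 ≤ α ∧ RoughlyWeighted f α}

/-- A simple game: monotone, the empty coalition loses and the grand coalition wins. -/
def SimpleGame {n : ℕ} (χ : Finset (Fin n) → Bool) : Prop :=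
  χ ∅ = false ∧ χ Finset.univ = true ∧
    ∀ S T : Finset (Fin n), S ⊆ T → χ S = true → χ T = true

/-- A function is strong if the complement of every losing coalition is winning. -/
def Strong {n : ℕ} (f : Finset (Fin n) → Bool) : Prop :=
  ∀ S : Finset (Fin n), f S = false → f Sᶜ = true

/-- every strong function with `f ∅ = 0` on `n ≥ 1` voters is
`max(1, n-1)`-roughly weighted, and for `n ≥ 3` the bound `n - 1` is attained, so
the maximum of `μ(f)` over strong functions with `f ∅ = 0` equals `n - 1`. -/
theorem strong_boolean_max_critical_threshold (n : ℕ) (hn : 1 ≤ n) :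
    (∀ f : Finset (Fin n) → Bool, Strong f → f ∅ = false →
      RoughlyWeighted f (max 1 ((n : ℝ) - 1)) ∧ mu f ≤ max 1 ((n : ℝ) - 1)) ∧
    (3 ≤ n → (∃ f : Finset (Fin n) → Bool, Strong f ∧ f ∅ = false ∧
        mu f = (n : ℝ) - 1) ∧
      IsGreatest {α : ℝ | ∃ f : Finset (Fin n) → Bool, Strong f ∧ f ∅ = false ∧
        α = mu f} ((n : ℝ) - 1)) := by
  have hcardC : ∀ (S : Finset (Fin n)), S ≠ univ → (S.card : ℝ) ≤ (n : ℝ) - 1 := by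
    intro S hS
    have hlt : S.card < n := by
      have := Finset.card_lt_card (Finset.ssubset_univ_iff.mpr hS)
      simpa using this
    have : S.card + 1 ≤ n := hlt
    have := (Nat.cast_le (α := ℝ)).mpr this
    push_cast at this
    linarith
  have hupper : ∀ f : Finset (Fin n) → Bool, Strong f → f ∅ = false →
      RoughlyWeighted f (max 1 ((n : ℝ) - 1)) := by
    intro f hs h0
    refine ⟨fun _ => 1, ?_, ?_⟩
    · intro S hS
      have hne : S.Nonempty := by
        rcases S.eq_empty_or_nonempty with h | h
        · subst h; rw [h0] at hS; exact absurd hS (by simp)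
        · exact h
      have h1 : 1 ≤ (S.card : ℝ) := by exact_mod_cast hne.card_pos
      simpa using h1
    · intro S hS
      have hc : f Sᶜ = true := hs S hS
      have hSne : S ≠ univ := by
        intro h; subst h
        rw [Finset.compl_univ, h0] at hc
        exact absurd hc (by simp)
      calc ∑ _i ∈ S, (1 : ℝ) = S.card := by simp
        _ ≤ (n : ℝ) - 1 := hcardC S hSne
        _ ≤ max 1 ((n : ℝ) - 1) := le_max_right _ _
  have hmu : ∀ f : Finset (Fin n) → Bool, Strong f → f ∅ = false →
      mu f ≤ max 1 ((n : ℝ) - 1) := by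
    intro f hs h0
    apply csInf_le
    · exact ⟨1, fun x hx => hx.1⟩
    · exact ⟨le_max_left _ _, hupper f hs h0⟩
  refine ⟨fun f hs h0 => ⟨hupper f hs h0, hmu f hs h0⟩, fun h3 => ?_⟩
  -- the extremal example
  have i0 : Fin n := ⟨0, hn⟩
  haveI : Nonempty (Fin n) := ⟨i0⟩
  set C : Finset (Fin n) := ({i0} : Finset (Fin n))ᶜ with hC
  have hn3 : 2 ≤ (n : ℝ) - 1 := by
    have := (Nat.cast_le (α := ℝ)).mpr h3
    push_cast at this; linarith
  have hcardCval : (C.card : ℝ) = (n : ℝ) - 1 := by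
    have : C.card = n - 1 := by
      rw [hC, Finset.card_compl, Finset.card_singleton, Fintype.card_fin]
    rw [this]
    push_cast [Nat.cast_sub hn]
    ring
  set g : Finset (Fin n) → Bool := fun S => decide (S ≠ ∅ ∧ S ≠ C) with hg
  have hgtrue : ∀ S, g S = true ↔ (S ≠ ∅ ∧ S ≠ C) := by
    intro S; simp [hg]
  have hgfalse : ∀ S, g S = false ↔ (S = ∅ ∨ S = C) := by
    intro S
    simp only [hg, decide_eq_false_iff_not]
    tauto
  have hsingleton_ne : ∀ i : Fin n, ({i} : Finset (Fin n)) ≠ C := by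
    intro i h
    have : (({i} : Finset (Fin n)).card : ℝ) = (C.card : ℝ) := by rw [h]
    rw [hcardCval] at this
    simp at this
    linarith
  have hCne : C ≠ ∅ := by
    intro h
    have : (C.card : ℝ) = 0 := by rw [h]; simp
    rw [hcardCval] at this; linarith
  have hgstrong : Strong g := by
    intro S hS
    rcases (hgfalse S).mp hS with h | h
    · subst h
      rw [Finset.compl_empty]
      refine (hgtrue _).mpr ⟨?_, ?_⟩
      · exact Finset.univ_nonempty.ne_empty
      · intro h
        have : ((univ : Finset (Fin n)).card : ℝ) = (C.card : ℝ) := by rw [h]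
        rw [hcardCval] at this
        simp at this
        linarith
    · subst h
      have hcc : Cᶜ = ({i0} : Finset (Fin n)) := by rw [hC, compl_compl]
      rw [hcc]
      exact (hgtrue _).mpr ⟨by simp, hsingleton_ne i0⟩
  have hg0 : g ∅ = false := (hgfalse ∅).mpr (Or.inl rfl)
  have hgC : g C = false := (hgfalse C).mpr (Or.inr rfl)
  -- n - 1 is achievable
  have hmem : (1 : ℝ) ≤ (n : ℝ) - 1 ∧ RoughlyWeighted g ((n : ℝ) - 1) := by
    refine ⟨by linarith, fun _ => 1, ?_, ?_⟩
    · intro S hS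
      have hne : S.Nonempty :=
        Finset.nonempty_iff_ne_empty.mpr ((hgtrue S).mp hS).1
      have h1 : 1 ≤ (S.card : ℝ) := by exact_mod_cast hne.card_pos
      simpa using h1
    · intro S hS
      rcases (hgfalse S).mp hS with h | h <;> subst h
      · simp; linarith
      · calc ∑ _i ∈ C, (1 : ℝ) = C.card := by simp
          _ ≤ (n : ℝ) - 1 := le_of_eq hcardCval
  -- lower bound for any admissible α
  have hlb : ∀ α ∈ {α : ℝ | 1 ≤ α ∧ RoughlyWeighted g α}, (n : ℝ) - 1 ≤ α := by
    rintro α ⟨hα1, w, hw1, hw2⟩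
    have hwi : ∀ i ∈ C, (1 : ℝ) ≤ w i := by
      intro i _
      have : g {i} = true := (hgtrue _).mpr ⟨by simp, hsingleton_ne i⟩
      have := hw1 {i} this
      simpa using this
    have hsum : (C.card : ℝ) ≤ ∑ i ∈ C, w i := by
      have := Finset.card_nsmul_le_sum C w 1 hwi
      simpa using this
    have := hw2 C hgC
    rw [hcardCval] at hsum
    linarith
  have hmug : mu g = (n : ℝ) - 1 := by
    apply le_antisymm
    · exact csInf_le ⟨(n : ℝ) - 1, hlb⟩ hmem
    · exact le_csInf ⟨(n : ℝ) - 1, hmem⟩ hlb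
  refine ⟨⟨g, hgstrong, hg0, hmug⟩, ⟨g, hgstrong, hg0, hmug.symm⟩, ?_⟩
  rintro α ⟨f, hsf, h0f, rfl⟩
  have := hmu f hsf h0f
  rwa [max_eq_right (by linarith : (1 : ℝ) ≤ (n : ℝ) - 1)] at this
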